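/- Let λ₁ ≤ 1 ≤ λ₂ be real numbers, a ∈ ℝ, b ≥ 0, and θ ∈ (0, ∞). Define ψ(n,m₁,m₂) = 2^{na}·(2^n + 2^{nλ₁} + 2^{nλ₂} + 2^{nλ₁}|m₁| + 2^{nλ₂}|m₂|)^{-b}. Then ∑_{ℤ³} ψ^θ < ∞ if and only if b·θ > 2 and (λ₂ - λ₁)/θ + b·λ₁ < a < (λ₁ - λ₂)/θ + b·λ₂. -/

import Mathlib

lemma bern1 {s t : ℝ} (hs : 0 ≤ s) (ht : 0 < t) (ht1 : t ≤ 1) :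
    1 + s * (1 - t) ≤ t ^ (-s) := by
  rw [Real.rpow_def_of_pos ht]
  have h2 : Real.log t ≤ t - 1 := Real.log_le_sub_one_of_pos ht
  have : 1 + s * (1 - t) ≤ 1 + Real.log t * (-s) := by nlinarith
  refine this.trans ?_
  linarith [Real.add_one_le_exp (Real.log t * (-s))]

lemma bern2 {s r : ℝ} (hs : 0 ≤ s) (hr : 1 ≤ r) : 1 - r ^ (-s) ≤ s * (r - 1) := by
  have hr0 : (0:ℝ) < r := by linarith
  rw [Real.rpow_def_of_pos hr0]
  have h2 : Real.log r ≤ r - 1 := Real.log_le_sub_one_of_pos hr0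
  have hl : 0 ≤ Real.log r := Real.log_nonneg hr
  have := Real.add_one_le_exp (Real.log r * (-s))
  nlinarith

lemma key_upper {c x y : ℝ} (hc : 1 < c) (hx : 0 < x) (hxy : x ≤ y) :
    (c - 1) * (y - x) * y ^ (-c) ≤ x ^ (1 - c) - y ^ (1 - c) := by
  have hy : 0 < y := lt_of_lt_of_le hx hxy
  have ht : 0 < x / y := div_pos hx hy
  have ht1 : x / y ≤ 1 := (div_le_one hy).2 hxy
  have hb := bern1 (s := c - 1) (by linarith) ht ht1
  have hx' : x = (x / y) * y := by field_simp
  have hxp : x ^ (1 - c) = (x / y) ^ (1 - c) * y ^ (1 - c) := by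
    conv_lhs => rw [← div_mul_cancel₀ x hy.ne']
    rw [Real.mul_rpow ht.le hy.le]
  have h1c : (x / y) ^ (1 - c) = (x / y) ^ (-(c - 1)) := by ring_nf
  have hyc : y ^ (-c) = y ^ (1 - c) / y := by
    rw [← Real.rpow_sub_one hy.ne']; ring_nf
  have hyp : 0 < y ^ (1 - c) := Real.rpow_pos_of_pos hy _
  rw [hxp, h1c, hyc]
  have : (1 + (c - 1) * (1 - x / y)) * y ^ (1 - c) ≤ (x / y) ^ (-(c - 1)) * y ^ (1 - c) :=
    mul_le_mul_of_nonneg_right hb hyp.le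
  calc (c - 1) * (y - x) * (y ^ (1 - c) / y)
      = (1 + (c - 1) * (1 - x / y)) * y ^ (1 - c) - y ^ (1 - c) := by
        field_simp; ring
    _ ≤ (x / y) ^ (-(c - 1)) * y ^ (1 - c) - y ^ (1 - c) := by linarith

lemma key_lower {c x y : ℝ} (hc : 1 < c) (hx : 0 < x) (hxy : x ≤ y) :
    x ^ (1 - c) - y ^ (1 - c) ≤ (c - 1) * (y - x) * x ^ (-c) := by
  have hy : 0 < y := lt_of_lt_of_le hx hxy
  have hr : 1 ≤ y / x := (one_le_div hx).2 hxy
  have hb := bern2 (s := c - 1) (by linarith : (0:ℝ) ≤ c - 1) hr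
  have hyp : y ^ (1 - c) = (y / x) ^ (1 - c) * x ^ (1 - c) := by
    conv_lhs => rw [← div_mul_cancel₀ y hx.ne']
    rw [Real.mul_rpow (by positivity) hx.le]
  have h1c : (y / x) ^ (1 - c) = (y / x) ^ (-(c - 1)) := by ring_nf
  have hxc : x ^ (-c) = x ^ (1 - c) / x := by
    rw [← Real.rpow_sub_one hx.ne']; ring_nf
  have hxp : 0 < x ^ (1 - c) := Real.rpow_pos_of_pos hx _
  rw [hyp, h1c, hxc]
  have : (1 - (y / x) ^ (-(c - 1))) * x ^ (1 - c) ≤ ((c - 1) * (y / x - 1)) * x ^ (1 - c) :=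
    mul_le_mul_of_nonneg_right hb hxp.le
  calc x ^ (1 - c) - (y / x) ^ (-(c - 1)) * x ^ (1 - c)
      = (1 - (y / x) ^ (-(c - 1))) * x ^ (1 - c) := by ring
    _ ≤ ((c - 1) * (y / x - 1)) * x ^ (1 - c) := this
    _ = (c - 1) * (y - x) * (x ^ (1 - c) / x) := by field_simp

section OneDim
variable {A B c : ℝ}

lemma sum_nat (hA : 0 < A) (hB : 0 < B) (hc : 1 < c) :
    Summable (fun m : ℕ => (A + B * m) ^ (-c)) ∧
      (∑' m : ℕ, (A + B * m) ^ (-c)) ≤ A ^ (-c) + A ^ (1 - c) / ((c - 1) * B) ∧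
      A ^ (1 - c) / ((c - 1) * B) ≤ ∑' m : ℕ, (A + B * m) ^ (-c) := by
  have hd : 0 < (c - 1) * B := mul_pos (by linarith) hB
  have hpos : ∀ m : ℕ, 0 < A + B * m := fun m => by positivity
  set g : ℕ → ℝ := fun m => (A + B * m) ^ (1 - c) / ((c - 1) * B) with hg
  have hgpos : ∀ m : ℕ, 0 < g m := fun m => div_pos (Real.rpow_pos_of_pos (hpos m) _) hd
  have hxy : ∀ m : ℕ, (A + B * m) ≤ A + B * ((m + 1 : ℕ) : ℝ) := by
    intro m; push_cast; nlinarith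
  have hyx : ∀ m : ℕ, (A + B * ((m+1:ℕ):ℝ)) - (A + B * (m:ℕ)) = B := by
    intro m; push_cast; ring
  have hstep : ∀ m : ℕ, (A + B * ((m + 1 : ℕ) : ℝ)) ^ (-c) ≤ g m - g (m + 1) := by
    intro m
    have h := key_upper hc (hpos m) (hxy m)
    rw [hyx m] at h
    show _ ≤ (A + B * (m:ℕ)) ^ (1 - c) / ((c - 1) * B)
        - (A + B * ((m+1:ℕ):ℝ)) ^ (1 - c) / ((c - 1) * B)
    rw [div_sub_div_same, le_div_iff₀ hd]
    nlinarith [h]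
  have hstep2 : ∀ m : ℕ, g m - g (m + 1) ≤ (A + B * (m:ℕ)) ^ (-c) := by
    intro m
    have h := key_lower hc (hpos m) (hxy m)
    rw [hyx m] at h
    show (A + B * (m:ℕ)) ^ (1 - c) / ((c - 1) * B)
        - (A + B * ((m+1:ℕ):ℝ)) ^ (1 - c) / ((c - 1) * B) ≤ _
    rw [div_sub_div_same, div_le_iff₀ hd]
    nlinarith [h]
  have hnn : ∀ m : ℕ, 0 ≤ (A + B * (m:ℕ)) ^ (-c) := fun m => (Real.rpow_pos_of_pos (hpos m) _).le
  -- partial sums of shifted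
  have hpartial : ∀ N : ℕ, ∑ m ∈ Finset.range N, (A + B * ((m+1:ℕ):ℝ)) ^ (-c) ≤ g 0 := by
    intro N
    calc ∑ m ∈ Finset.range N, (A + B * ((m+1:ℕ):ℝ)) ^ (-c)
        ≤ ∑ m ∈ Finset.range N, (g m - g (m + 1)) := Finset.sum_le_sum fun m _ => hstep m
      _ = g 0 - g N := Finset.sum_range_sub' g N
      _ ≤ g 0 := by linarith [hgpos N]
  have hsum1 : Summable (fun m : ℕ => (A + B * ((m+1:ℕ):ℝ)) ^ (-c)) :=
    summable_of_sum_range_le (fun m => hnn (m+1)) hpartial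
  have hsum : Summable (fun m : ℕ => (A + B * (m:ℕ)) ^ (-c)) := by
    rw [← summable_nat_add_iff 1]; exact hsum1
  refine ⟨hsum, ?_, ?_⟩
  · have h0 : (∑' m : ℕ, (A + B * (m:ℕ)) ^ (-c))
        = (A + B * ((0:ℕ):ℝ)) ^ (-c) + ∑' m : ℕ, (A + B * ((m+1:ℕ):ℝ)) ^ (-c) :=
      Summable.tsum_eq_zero_add hsum
    rw [h0]
    have : (A + B * ((0:ℕ):ℝ)) ^ (-c) = A ^ (-c) := by norm_num
    rw [this]
    have ht : (∑' m : ℕ, (A + B * ((m+1:ℕ):ℝ)) ^ (-c)) ≤ g 0 :=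
      Real.tsum_le_of_sum_range_le (fun m => hnn (m+1)) hpartial
    have hg0 : g 0 = A ^ (1 - c) / ((c - 1) * B) := by simp [hg]
    linarith
  · have hlb : ∀ N : ℕ, g 0 - g N ≤ ∑' m : ℕ, (A + B * (m:ℕ)) ^ (-c) := by
      intro N
      calc g 0 - g N = ∑ m ∈ Finset.range N, (g m - g (m + 1)) := (Finset.sum_range_sub' g N).symm
        _ ≤ ∑ m ∈ Finset.range N, (A + B * (m:ℕ)) ^ (-c) := Finset.sum_le_sum fun m _ => hstep2 m
        _ ≤ ∑' m : ℕ, (A + B * (m:ℕ)) ^ (-c) := Summable.sum_le_tsum _ (fun m _ => hnn m) hsum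
    have hgN : Filter.Tendsto g Filter.atTop (nhds 0) := by
      have h1 : Filter.Tendsto (fun m : ℕ => A + B * (m:ℝ)) Filter.atTop Filter.atTop := by
        apply Filter.tendsto_atTop_add_const_left
        exact (tendsto_natCast_atTop_atTop (R := ℝ)).const_mul_atTop hB
      have h2 : Filter.Tendsto (fun x : ℝ => x ^ (-(c-1))) Filter.atTop (nhds 0) :=
        tendsto_rpow_neg_atTop (by linarith)
      have h3 := (h2.comp h1).div_const ((c - 1) * B)
      simp only [Function.comp] at h3
      convert h3 using 2 with m
      · rw [hg]; norm_num
      · norm_num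
    have : Filter.Tendsto (fun N : ℕ => g 0 - g N) Filter.atTop (nhds (g 0)) := by
      simpa using (tendsto_const_nhds (x := g 0)).sub hgN
    have hfin : g 0 ≤ ∑' m : ℕ, (A + B * (m:ℕ)) ^ (-c) := le_of_tendsto' this hlb
    have hg0 : g 0 = A ^ (1 - c) / ((c - 1) * B) := by simp [hg]
    linarith
end OneDim

section OneDimZ
variable {A B c : ℝ}

lemma zcast_abs (m : ℕ) : |((m:ℤ):ℝ)| = (m:ℝ) := by
  rw [Int.cast_natCast, abs_of_nonneg (Nat.cast_nonneg m)]

lemma zcast_abs' (m : ℕ) : |((-(m:ℤ) :ℤ):ℝ)| = (m:ℝ) := by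
  push_cast; rw [abs_neg, abs_of_nonneg (Nat.cast_nonneg m)]

lemma sumZ_summable (hA : 0 < A) (hB : 0 < B) (hc : 1 < c) :
    Summable (fun m : ℤ => (A + B * |(m:ℝ)|) ^ (-c)) := by
  apply Summable.of_nat_of_neg
  · exact (sum_nat hA hB hc).1.congr fun m => by rw [zcast_abs]
  · exact (sum_nat hA hB hc).1.congr fun m => by rw [zcast_abs']

lemma sumZ_upper (hA : 0 < A) (hB : 0 < B) (hc : 1 < c) :
    (∑' m : ℤ, (A + B * |(m:ℝ)|) ^ (-c))
      ≤ 2 * (A ^ (-c) + A ^ (1 - c) / ((c - 1) * B)) := by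
  have h1 := (sum_nat hA hB hc).1
  rw [show (∑' m : ℤ, (A + B * |(m:ℝ)|) ^ (-c)) = (∑' m : ℕ, (A + B * |((m:ℤ):ℝ)|) ^ (-c)) + (∑' m : ℕ, (A + B * |((-(m:ℤ):ℤ):ℝ)|) ^ (-c)) - (A + B * |((0:ℤ):ℝ)|) ^ (-c) from Summable.tsum_of_nat_of_neg (h1.congr fun m => by rw [zcast_abs])
      (h1.congr fun m => by rw [zcast_abs'])]
  have hnn : (0:ℝ) ≤ (A + B * |((0:ℤ):ℝ)|) ^ (-c) := Real.rpow_nonneg (by positivity) _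
  have hb := (sum_nat hA hB hc).2.1
  have t1 : (∑' m : ℕ, (A + B * |((m:ℤ):ℝ)|) ^ (-c)) ≤ A ^ (-c) + A ^ (1 - c) / ((c - 1) * B) := by
    rw [tsum_congr fun m => by rw [zcast_abs]]; exact hb
  have t2 : (∑' m : ℕ, (A + B * |((-(m:ℤ):ℤ):ℝ)|) ^ (-c)) ≤ A ^ (-c) + A ^ (1 - c) / ((c - 1) * B) := by
    rw [tsum_congr fun m => by rw [zcast_abs']]; exact hb
  exact (sub_le_self _ hnn).trans ((add_le_add t1 t2).trans (le_of_eq (two_mul _).symm))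

set_option maxHeartbeats 1000000 in
lemma sumZ_lower (hA : 0 < A) (hB : 0 < B) (hc : 1 < c) :
    A ^ (1 - c) / ((c - 1) * B) ≤ ∑' m : ℤ, (A + B * |(m:ℝ)|) ^ (-c) := by
  have h1 := (sum_nat hA hB hc).1
  have hp : Summable (fun m : ℕ => (A + B * |((m:ℤ):ℝ)|) ^ (-c)) :=
    h1.congr fun m => by rw [zcast_abs]
  have hn : Summable (fun m : ℕ => (A + B * |((-(m:ℤ):ℤ):ℝ)|) ^ (-c)) :=
    h1.congr fun m => by rw [zcast_abs']
  rw [show (∑' m : ℤ, (A + B * |(m:ℝ)|) ^ (-c)) = (∑' m : ℕ, (A + B * |((m:ℤ):ℝ)|) ^ (-c)) + (∑' m : ℕ, (A + B * |((-(m:ℤ):ℤ):ℝ)|) ^ (-c)) - (A + B * |((0:ℤ):ℝ)|) ^ (-c) from Summable.tsum_of_nat_of_neg hp hn]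
  have t1 : A ^ (1 - c) / ((c - 1) * B) ≤ ∑' m : ℕ, (A + B * |((m:ℤ):ℝ)|) ^ (-c) := by
    rw [tsum_congr fun m => by rw [zcast_abs]]
    exact (sum_nat hA hB hc).2.2
  have t2 : (A + B * |((0:ℤ):ℝ)|) ^ (-c) ≤ ∑' m : ℕ, (A + B * |((-(m:ℤ):ℤ):ℝ)|) ^ (-c) := by
    have := Summable.le_tsum hn 0 (fun m _ => Real.rpow_nonneg (by positivity) _)
    simpa using this
  exact le_sub_iff_add_le.mpr (add_le_add t1 (by convert t2 using 3 <;> simp))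

lemma sumZ_not_summable (hA : 0 < A) (hB : 0 < B) (hc : c ≤ 1) :
    ¬ Summable (fun m : ℤ => (A + B * |(m:ℝ)|) ^ (-c)) := by
  intro h
  have hnat : Summable (fun m : ℕ => (A + B * (m:ℝ)) ^ (-c)) := by
    have := h.comp_injective (Nat.cast_injective (R := ℤ))
    exact this.congr fun m => by simp only [Function.comp]; rw [zcast_abs]
  rcases le_or_gt c 0 with hc0 | hc0
  · -- terms bounded below by A^(-c) > 0
    have hlim := hnat.tendsto_atTop_zero
    have hev : ∀ᶠ m : ℕ in Filter.atTop, (A + B * (m:ℝ)) ^ (-c) < A ^ (-c) :=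
      hlim.eventually_lt_const (Real.rpow_pos_of_pos hA _)
    obtain ⟨m, hm⟩ := hev.exists
    have : A ^ (-c) ≤ (A + B * (m:ℝ)) ^ (-c) :=
      Real.rpow_le_rpow hA.le (by nlinarith [(Nat.cast_nonneg m : (0:ℝ) ≤ m)]) (by linarith)
    linarith
  · have hcomp : Summable (fun m : ℕ => ((A + B) * ((m:ℝ) + 1)) ^ (-c)) := by
      apply hnat.of_nonneg_of_le (fun m => Real.rpow_nonneg (by positivity) _)
      intro m
      apply Real.rpow_le_rpow_of_nonpos (by positivity) _ (by linarith)
      nlinarith [(Nat.cast_nonneg m : (0:ℝ) ≤ m)]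
    have hsplit : Summable (fun m : ℕ => (A + B) ^ (-c) * ((m:ℝ) + 1) ^ (-c)) := by
      exact hcomp.congr fun m => by
        rw [Real.mul_rpow (by positivity) (by positivity)]
    have hpow : Summable (fun m : ℕ => ((m:ℝ) + 1) ^ (-c)) := by
      have hne : (A + B) ^ (-c) ≠ 0 := (Real.rpow_pos_of_pos (by positivity) _).ne'
      exact (summable_mul_left_iff hne).mp hsplit
    have hshift : Summable (fun m : ℕ => ((m:ℝ)) ^ (-c)) := by
      rw [← summable_nat_add_iff 1] 
      exact hpow.congr fun m => by push_cast; ring_nf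
    rw [Real.summable_nat_rpow] at hshift
    linarith
end OneDimZ

section TwoDim
variable {A B C c : ℝ}

lemma sum2 (hA : 0 < A) (hB : 0 < B) (hC : 0 < C) (hBA : B ≤ A) (hCA : C ≤ A) (hc : 2 < c) :
    Summable (fun p : ℤ × ℤ => (A + B * |(p.1:ℝ)| + C * |(p.2:ℝ)|) ^ (-c)) ∧
      (∑' p : ℤ × ℤ, (A + B * |(p.1:ℝ)| + C * |(p.2:ℝ)|) ^ (-c))
        ≤ (2 + 2/(c-1)) * (2 + 2/(c-2)) * (A ^ (2-c) / (B * C)) ∧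
      A ^ (2-c) / ((c-1) * (c-2) * B * C) ≤
        ∑' p : ℤ × ℤ, (A + B * |(p.1:ℝ)| + C * |(p.2:ℝ)|) ^ (-c) := by
  have hc1 : 1 < c := by linarith
  have hc1' : 1 < c - 1 := by linarith
  have hApos : ∀ m : ℤ, 0 < A + B * |(m:ℝ)| := fun m => by positivity
  have hnn : ∀ p : ℤ × ℤ, 0 ≤ (A + B * |(p.1:ℝ)| + C * |(p.2:ℝ)|) ^ (-c) :=
    fun p => Real.rpow_nonneg (by positivity) _
  -- fibers
  have hfib : ∀ m₁ : ℤ, Summable (fun m₂ : ℤ => (A + B * |(m₁:ℝ)| + C * |(m₂:ℝ)|) ^ (-c)) :=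
    fun m₁ => sumZ_summable (hApos m₁) hC hc1
  -- pointwise bound on the inner tsum
  have hinner_ub : ∀ m₁ : ℤ,
      (∑' m₂ : ℤ, (A + B * |(m₁:ℝ)| + C * |(m₂:ℝ)|) ^ (-c))
        ≤ (2 + 2/(c-1)) / C * (A + B * |(m₁:ℝ)|) ^ (-(c-1)) := by
    intro m₁
    set A' := A + B * |(m₁:ℝ)| with hA'
    have hA'pos : 0 < A' := hApos m₁
    have hCA' : C ≤ A' := le_trans hCA (by nlinarith [abs_nonneg ((m₁:ℝ)), hB.le])
    have h1 := sumZ_upper hA'pos hC hc1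
    have h2 : A' ^ (-c) ≤ A' ^ (1 - c) / C := by
      rw [show (-c) = (1 - c) - 1 by ring, Real.rpow_sub hA'pos, Real.rpow_one]
      exact div_le_div_of_nonneg_left (Real.rpow_nonneg hA'pos.le _) hC hCA'
    have h3 : (0:ℝ) < (c - 1) * C := by positivity
    have h4 : A' ^ (1 - c) / ((c - 1) * C) = (1/(c-1)) * (A' ^ (1-c) / C) := by
      field_simp
    have h5 : A' ^ (1 - c) = A' ^ (-(c-1)) := by ring_nf
    calc (∑' m₂ : ℤ, (A' + C * |(m₂:ℝ)|) ^ (-c))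
        ≤ 2 * (A' ^ (-c) + A' ^ (1 - c) / ((c - 1) * C)) := h1
      _ ≤ 2 * (A' ^ (1-c) / C + (1/(c-1)) * (A' ^ (1-c) / C)) := by rw [← h4]; linarith
      _ = (2 + 2/(c-1)) / C * A' ^ (1-c) := by field_simp
      _ = (2 + 2/(c-1)) / C * A' ^ (-(c-1)) := by rw [h5]
  have hinner_lb : ∀ m₁ : ℤ,
      (1/((c-1)*C)) * (A + B * |(m₁:ℝ)|) ^ (-(c-1))
        ≤ ∑' m₂ : ℤ, (A + B * |(m₁:ℝ)| + C * |(m₂:ℝ)|) ^ (-c) := by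
    intro m₁
    have h1 := sumZ_lower (hApos m₁) hC hc1
    have h5 : (A + B * |(m₁:ℝ)|) ^ ((1:ℝ) - c) = (A + B * |(m₁:ℝ)|) ^ (-(c-1)) := by ring_nf
    calc (1/((c-1)*C)) * (A + B * |(m₁:ℝ)|) ^ (-(c-1))
        = (A + B * |(m₁:ℝ)|) ^ (1 - c) / ((c-1)*C) := by rw [h5]; ring
      _ ≤ _ := h1
  -- outer comparison function is summable
  have houter : Summable (fun m₁ : ℤ => (2 + 2/(c-1)) / C * (A + B * |(m₁:ℝ)|) ^ (-(c-1))) :=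
    (sumZ_summable hA hB hc1').mul_left _
  have hmargnn : ∀ m₁ : ℤ, 0 ≤ ∑' m₂ : ℤ, (A + B * |(m₁:ℝ)| + C * |(m₂:ℝ)|) ^ (-c) :=
    fun m₁ => tsum_nonneg fun m₂ => Real.rpow_nonneg (by positivity) _
  have hmarg : Summable (fun m₁ : ℤ => ∑' m₂ : ℤ, (A + B * |(m₁:ℝ)| + C * |(m₂:ℝ)|) ^ (-c)) :=
    houter.of_nonneg_of_le hmargnn hinner_ub
  have hsum : Summable (fun p : ℤ × ℤ => (A + B * |(p.1:ℝ)| + C * |(p.2:ℝ)|) ^ (-c)) :=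
    (summable_prod_of_nonneg hnn).2 ⟨hfib, hmarg⟩
  have hts : (∑' p : ℤ × ℤ, (A + B * |(p.1:ℝ)| + C * |(p.2:ℝ)|) ^ (-c))
      = ∑' m₁ : ℤ, ∑' m₂ : ℤ, (A + B * |(m₁:ℝ)| + C * |(m₂:ℝ)|) ^ (-c) :=
    Summable.tsum_prod' hsum hfib
  refine ⟨hsum, ?_, ?_⟩
  · rw [hts]
    have hstep := Summable.tsum_le_tsum hinner_ub hmarg houter
    refine hstep.trans ?_
    rw [tsum_mul_left]
    have hub := sumZ_upper hA hB hc1' (B := B)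
    have e1 : A ^ (1 - (c-1)) = A ^ (2-c) := by ring_nf
    have e2 : A ^ (-(c-1)) ≤ A ^ (2-c) / B := by
      rw [show (-(c-1)) = (2-c) - 1 by ring, Real.rpow_sub hA, Real.rpow_one]
      exact div_le_div_of_nonneg_left (Real.rpow_nonneg hA.le _) hB hBA
    rw [e1] at hub
    have hA2c : 0 < A ^ (2-c) := Real.rpow_pos_of_pos hA _
    have hfrac : (0:ℝ) < 2 + 2/(c-1) := by positivity
    have h6 : (∑' m : ℤ, (A + B * |(m:ℝ)|) ^ (-(c-1)))
        ≤ (2 + 2/(c-2)) * (A ^ (2-c) / B) := by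
      refine hub.trans ?_
      have : A ^ (2-c) / ((c-1-1) * B) = (1/(c-2)) * (A ^ (2-c)/B) := by
        rw [show c - 1 - 1 = c - 2 by ring]; field_simp
      rw [this]
      have : (2 + 2/(c-2)) * (A ^ (2-c) / B)
          = 2 * (A ^ (2-c)/B) + 2 * (1/(c-2) * (A ^ (2-c)/B)) := by ring
      linarith
    calc (2 + 2/(c-1)) / C * ∑' m : ℤ, (A + B * |(m:ℝ)|) ^ (-(c-1))
        ≤ (2 + 2/(c-1)) / C * ((2 + 2/(c-2)) * (A ^ (2-c) / B)) := by
          apply mul_le_mul_of_nonneg_left h6 (by positivity)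
      _ = (2 + 2/(c-1)) * (2 + 2/(c-2)) * (A ^ (2-c) / (B * C)) := by
          field_simp
  · rw [hts]
    have hstep := Summable.tsum_le_tsum hinner_lb ((sumZ_summable hA hB hc1').mul_left _) hmarg
    refine le_trans ?_ hstep
    rw [tsum_mul_left]
    have hlb := sumZ_lower hA hB hc1' (B := B)
    have e1 : A ^ (1 - (c-1)) = A ^ (2-c) := by ring_nf
    rw [e1] at hlb
    have h7 : A ^ (2-c) / ((c-1)*(c-2)*B*C)
        = (1/((c-1)*C)) * (A ^ (2-c) / ((c-1-1)*B)) := by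
      rw [show c - 1 - 1 = c - 2 by ring]; field_simp
    rw [h7]
    apply mul_le_mul_of_nonneg_left hlb (by positivity)

lemma sum2_not_summable (hA : 0 < A) (hB : 0 < B) (hC : 0 < C) (hc : c ≤ 2) :
    ¬ Summable (fun p : ℤ × ℤ => (A + B * |(p.1:ℝ)| + C * |(p.2:ℝ)|) ^ (-c)) := by
  intro h
  have hnn : ∀ p : ℤ × ℤ, 0 ≤ (A + B * |(p.1:ℝ)| + C * |(p.2:ℝ)|) ^ (-c) :=
    fun p => Real.rpow_nonneg (by positivity) _
  rcases le_or_gt c 1 with hc1 | hc1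
  · have hfib := h.prod_factor 0
    have hA0 : (0:ℝ) < A + B * |((0:ℤ):ℝ)| := by positivity
    exact sumZ_not_summable hA0 hC hc1 hfib
  · have hmarg := ((summable_prod_of_nonneg hnn).1 h).2
    have hApos : ∀ m : ℤ, 0 < A + B * |(m:ℝ)| := fun m => by positivity
    have hlb : ∀ m₁ : ℤ,
        (1/((c-1)*C)) * (A + B * |(m₁:ℝ)|) ^ (-(c-1))
          ≤ ∑' m₂ : ℤ, (A + B * |(m₁:ℝ)| + C * |(m₂:ℝ)|) ^ (-c) := by
      intro m₁
      have h1 := sumZ_lower (hApos m₁) hC hc1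
      have h5 : (A + B * |(m₁:ℝ)|) ^ ((1:ℝ) - c) = (A + B * |(m₁:ℝ)|) ^ (-(c-1)) := by ring_nf
      calc (1/((c-1)*C)) * (A + B * |(m₁:ℝ)|) ^ (-(c-1))
          = (A + B * |(m₁:ℝ)|) ^ (1 - c) / ((c-1)*C) := by rw [h5]; ring
        _ ≤ _ := h1
    have hcC : (0:ℝ) < (c-1)*C := mul_pos (by linarith) hC
    have hs2 : Summable (fun m₁ : ℤ => (1/((c-1)*C)) * (A + B * |(m₁:ℝ)|) ^ (-(c-1))) :=
      hmarg.of_nonneg_of_le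
        (fun m₁ => mul_nonneg (le_of_lt (div_pos one_pos hcC))
          (Real.rpow_nonneg (by positivity) _)) hlb
    have hne : (1/((c-1)*C)) ≠ 0 := (div_pos one_pos hcC).ne'
    have hs3 : Summable (fun m₁ : ℤ => (A + B * |(m₁:ℝ)|) ^ (-(c-1))) :=
      (summable_mul_left_iff hne).mp hs2
    exact sumZ_not_summable hA hB (by linarith : c - 1 ≤ 1) hs3
end TwoDim

noncomputable def shearPsi (l1 l2 a b : ℝ) (n m₁ m₂ : ℤ) : ℝ :=
  (2 : ℝ) ^ ((n : ℝ) * a) *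
    ((2 : ℝ) ^ (n : ℝ) + (2 : ℝ) ^ ((n : ℝ) * l1) + (2 : ℝ) ^ ((n : ℝ) * l2)
      + (2 : ℝ) ^ ((n : ℝ) * l1) * |(m₁ : ℝ)| + (2 : ℝ) ^ ((n : ℝ) * l2) * |(m₂ : ℝ)|) ^ (-b)

lemma geo_pow (e : ℝ) (k : ℕ) : (2:ℝ) ^ ((k:ℝ) * e) = ((2:ℝ) ^ e) ^ k := by
  rw [mul_comm, Real.rpow_mul (by norm_num : (0:ℝ) ≤ 2), Real.rpow_natCast]

lemma geo_summable {e : ℝ} (K : ℝ) (he : e < 0) :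
    Summable (fun k : ℕ => K * (2:ℝ) ^ ((k:ℝ) * e)) := by
  have : Summable (fun k : ℕ => ((2:ℝ) ^ e) ^ k) :=
    summable_geometric_of_lt_one (Real.rpow_nonneg (by norm_num) _)
      (Real.rpow_lt_one_of_one_lt_of_neg one_lt_two he)
  exact (this.mul_left K).congr fun k => by rw [geo_pow]

lemma geo_not_summable {e K : ℝ} (hK : 0 < K)
    (h : Summable (fun k : ℕ => K * (2:ℝ) ^ ((k:ℝ) * e))) : e < 0 := by
  by_contra he
  push_neg at he
  have h2 : Summable (fun k : ℕ => ((2:ℝ) ^ e) ^ k) := by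
    have := (summable_mul_left_iff hK.ne').mp h
    exact this.congr fun k => (geo_pow e k)
  rw [summable_geometric_iff_norm_lt_one] at h2
  have h3 : (1:ℝ) ≤ (2:ℝ) ^ e := by
    calc (1:ℝ) = (2:ℝ) ^ (0:ℝ) := (Real.rpow_zero 2).symm
      _ ≤ (2:ℝ) ^ e := Real.rpow_le_rpow_of_exponent_le one_le_two he
  rw [Real.norm_eq_abs, abs_of_nonneg (by linarith)] at h2
  linarith

theorem shearPsi_summable_iff_case3 (l1 l2 a b θ : ℝ) (h1 : l1 ≤ 1) (h2 : 1 ≤ l2)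
    (hb : 0 ≤ b) (hθ : 0 < θ) :
    Summable (fun p : ℤ × ℤ × ℤ => (shearPsi l1 l2 a b p.1 p.2.1 p.2.2) ^ θ) ↔
      (2 < b * θ ∧ (l2 - l1) / θ + b * l1 < a ∧ a < (l1 - l2) / θ + b * l2) := by
  set c : ℝ := b * θ with hc_def
  set An : ℤ → ℝ := fun n => (2:ℝ) ^ ((n:ℝ)) + (2:ℝ) ^ ((n:ℝ)*l1) + (2:ℝ) ^ ((n:ℝ)*l2)
    with hAn
  set g : ℤ × ℤ × ℤ → ℝ := fun p => (2:ℝ) ^ ((p.1:ℝ)*(a*θ)) *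
    (An p.1 + (2:ℝ) ^ ((p.1:ℝ)*l1) * |(p.2.1:ℝ)| + (2:ℝ) ^ ((p.1:ℝ)*l2) * |(p.2.2:ℝ)|) ^ (-c)
    with hg
  have hApos : ∀ n : ℤ, 0 < An n := fun n => by rw [hAn]; positivity
  have hBpos : ∀ n : ℤ, (0:ℝ) < (2:ℝ) ^ ((n:ℝ)*l1) := fun n => Real.rpow_pos_of_pos two_pos _
  have hCpos : ∀ n : ℤ, (0:ℝ) < (2:ℝ) ^ ((n:ℝ)*l2) := fun n => Real.rpow_pos_of_pos two_pos _
  have hBA : ∀ n : ℤ, (2:ℝ) ^ ((n:ℝ)*l1) ≤ An n := fun n => by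
    have h := Real.rpow_pos_of_pos two_pos ((n:ℝ))
    have h' := Real.rpow_pos_of_pos two_pos ((n:ℝ)*l2)
    rw [hAn]; simp only; linarith
  have hCA : ∀ n : ℤ, (2:ℝ) ^ ((n:ℝ)*l2) ≤ An n := fun n => by
    have h := Real.rpow_pos_of_pos two_pos ((n:ℝ))
    have h' := Real.rpow_pos_of_pos two_pos ((n:ℝ)*l1)
    rw [hAn]; simp only; linarith
  have hfg : ∀ p : ℤ × ℤ × ℤ, (shearPsi l1 l2 a b p.1 p.2.1 p.2.2) ^ θ = g p := by
    rintro ⟨n, m₁, m₂⟩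
    rw [hg, hAn]
    simp only [shearPsi]
    set X : ℝ := (2:ℝ) ^ ((n:ℝ)) + (2:ℝ) ^ ((n:ℝ)*l1) + (2:ℝ) ^ ((n:ℝ)*l2)
      + (2:ℝ) ^ ((n:ℝ)*l1) * |(m₁:ℝ)| + (2:ℝ) ^ ((n:ℝ)*l2) * |(m₂:ℝ)| with hX
    have hXpos : 0 < X := by rw [hX]; positivity
    rw [Real.mul_rpow (Real.rpow_nonneg (by norm_num) _) (Real.rpow_nonneg hXpos.le _)]
    rw [← Real.rpow_mul (by norm_num : (0:ℝ) ≤ 2), ← Real.rpow_mul hXpos.le]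
    rw [show (n:ℝ) * a * θ = (n:ℝ) * (a * θ) by ring,
      show -b * θ = -(b * θ) by ring]
  rw [summable_congr hfg]
  set e2 : ℝ := a*θ + l2*(2-c) - l1 - l2 with he2def
  set e1 : ℝ := a*θ + l1*(2-c) - l1 - l2 with he1def
  have hiff2 : a < (l1 - l2) / θ + b * l2 ↔ e2 < 0 := by
    rw [he2def, hc_def,
      show (l1 - l2) / θ + b * l2 = (l1 - l2 + b * l2 * θ) / θ by field_simp,
      lt_div_iff₀ hθ]
    constructor <;> intro h <;> nlinarith
  have hiff1 : (l2 - l1) / θ + b * l1 < a ↔ 0 < e1 := by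
    rw [he1def, hc_def,
      show (l2 - l1) / θ + b * l1 = (l2 - l1 + b * l1 * θ) / θ by field_simp,
      div_lt_iff₀ hθ]
    constructor <;> intro h <;> nlinarith
  rw [hiff1, hiff2]
  have hgnn : ∀ p : ℤ × ℤ × ℤ, 0 ≤ g p := by
    rintro ⟨n, m₁, m₂⟩
    rw [hg]
    exact mul_nonneg (Real.rpow_nonneg (by norm_num) _)
      (Real.rpow_nonneg (by positivity) _)
  have hcollect : ∀ x y z w : ℝ,
      (2:ℝ) ^ (x + y - z - w) = (2:ℝ)^x * (2:ℝ)^y / ((2:ℝ)^z * (2:ℝ)^w) := by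
    intro x y z w
    rw [Real.rpow_sub two_pos, Real.rpow_sub two_pos, Real.rpow_add two_pos, div_div]
  -- upper and lower bounds for the inner double sums, assuming 2 < c
  have hmain : ∀ hc2 : 2 < c, True := fun _ => trivial
  constructor
  · -- necessity
    intro hs
    obtain ⟨hfib, hmarg⟩ := (summable_prod_of_nonneg hgnn).1 hs
    have hc2 : 2 < c := by
      by_contra hcle
      push_neg at hcle
      have h0 := hfib 0
      have hne : ((2:ℝ) ^ (((0:ℤ):ℝ)*(a*θ))) ≠ 0 := (Real.rpow_pos_of_pos two_pos _).ne'
      have h0' : Summable (fun q : ℤ × ℤ =>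
          (An 0 + (2:ℝ)^(((0:ℤ):ℝ)*l1) * |(q.1:ℝ)| + (2:ℝ)^(((0:ℤ):ℝ)*l2) * |(q.2:ℝ)|) ^ (-c)) := by
        refine (summable_mul_left_iff hne).mp (h0.congr fun q => ?_)
        rw [hg]
      exact sum2_not_summable (hApos 0) (hBpos 0) (hCpos 0) hcle h0'
    have hc1 : 1 < c := by linarith
    set K : ℝ := (3:ℝ)^(2-c) / ((c-1)*(c-2)) with hK
    have hKpos : 0 < K := by
      rw [hK]
      exact div_pos (Real.rpow_pos_of_pos (by norm_num) _)
        (mul_pos (by linarith) (by linarith))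
    have hlow : ∀ (l e : ℝ), e = a*θ + l*(2-c) - l1 - l2 → ∀ n : ℤ,
        An n ≤ 3 * (2:ℝ)^((n:ℝ)*l) →
        K * (2:ℝ) ^ ((n:ℝ) * e) ≤ ∑' q : ℤ × ℤ, g (n, q) := by
      intro l e he n hAle
      subst he
      have hS := (sum2 (hApos n) (hBpos n) (hCpos n) (hBA n) (hCA n) hc2).2.2
      have h3 : ((3:ℝ) * (2:ℝ)^((n:ℝ)*l)) ^ (2-c) ≤ (An n) ^ (2-c) :=
        Real.rpow_le_rpow_of_nonpos (by positivity) hAle (by linarith)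
      rw [Real.mul_rpow (by norm_num) (Real.rpow_nonneg (by norm_num) _),
        ← Real.rpow_mul (by norm_num : (0:ℝ) ≤ 2)] at h3
      have htq : (∑' q : ℤ × ℤ, g (n, q)) = (2:ℝ)^((n:ℝ)*(a*θ)) *
          ∑' q : ℤ × ℤ, (An n + (2:ℝ)^((n:ℝ)*l1) * |(q.1:ℝ)|
            + (2:ℝ)^((n:ℝ)*l2) * |(q.2:ℝ)|) ^ (-c) := by
        simp only [hg]
        exact tsum_mul_left
      rw [htq]
      have hd : (0:ℝ) < (c-1)*(c-2)*(2:ℝ)^((n:ℝ)*l1)*(2:ℝ)^((n:ℝ)*l2) :=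
        mul_pos (mul_pos (mul_pos (by linarith) (by linarith)) (hBpos n)) (hCpos n)
      have hne1 : ((c-1)*(c-2)) ≠ 0 := (mul_pos (by linarith : (0:ℝ) < c - 1)
        (by linarith : (0:ℝ) < c - 2)).ne'
      have hne2 : (2:ℝ)^((n:ℝ)*l1) ≠ 0 := (hBpos n).ne'
      have hne3 : (2:ℝ)^((n:ℝ)*l2) ≠ 0 := (hCpos n).ne'
      have hq : K * (2:ℝ) ^ ((n:ℝ) * (a*θ + l*(2-c) - l1 - l2))
          = (2:ℝ)^((n:ℝ)*(a*θ)) *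
            (((3:ℝ)^(2-c) * (2:ℝ)^((n:ℝ)*l*(2-c)))
              / ((c-1)*(c-2)*(2:ℝ)^((n:ℝ)*l1)*(2:ℝ)^((n:ℝ)*l2))) := by
        rw [hK, show (n:ℝ) * (a*θ + l*(2-c) - l1 - l2)
            = (n:ℝ)*(a*θ) + (n:ℝ)*l*(2-c) - (n:ℝ)*l1 - (n:ℝ)*l2 by ring]
        rw [hcollect]
        field_simp
      rw [hq]
      apply mul_le_mul_of_nonneg_left _ (Real.rpow_nonneg (by norm_num) _)
      calc ((3:ℝ)^(2-c) * (2:ℝ)^((n:ℝ)*l*(2-c)))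
            / ((c-1)*(c-2)*(2:ℝ)^((n:ℝ)*l1)*(2:ℝ)^((n:ℝ)*l2))
          ≤ (An n)^(2-c) / ((c-1)*(c-2)*(2:ℝ)^((n:ℝ)*l1)*(2:ℝ)^((n:ℝ)*l2)) :=
            (div_le_div_iff_of_pos_right hd).mpr h3
        _ = (An n)^(2-c) / ((c-1)*(c-2)*((2:ℝ)^((n:ℝ)*l1))*((2:ℝ)^((n:ℝ)*l2))) := by ring_nf
        _ ≤ _ := hS
    have hA_le2 : ∀ n : ℤ, 0 ≤ (n:ℝ) → An n ≤ 3 * (2:ℝ)^((n:ℝ)*l2) := by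
      intro n hn
      have e1' : (2:ℝ)^((n:ℝ)) ≤ (2:ℝ)^((n:ℝ)*l2) :=
        Real.rpow_le_rpow_of_exponent_le one_le_two (by nlinarith)
      have e2' : (2:ℝ)^((n:ℝ)*l1) ≤ (2:ℝ)^((n:ℝ)*l2) :=
        Real.rpow_le_rpow_of_exponent_le one_le_two (by nlinarith)
      rw [hAn]; simp only; linarith
    have hA_le1 : ∀ n : ℤ, (n:ℝ) ≤ 0 → An n ≤ 3 * (2:ℝ)^((n:ℝ)*l1) := by
      intro n hn
      have e1' : (2:ℝ)^((n:ℝ)) ≤ (2:ℝ)^((n:ℝ)*l1) :=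
        Real.rpow_le_rpow_of_exponent_le one_le_two (by nlinarith)
      have e2' : (2:ℝ)^((n:ℝ)*l2) ≤ (2:ℝ)^((n:ℝ)*l1) :=
        Real.rpow_le_rpow_of_exponent_le one_le_two (by nlinarith)
      rw [hAn]; simp only; linarith
    refine ⟨hc2, ?_, ?_⟩
    · -- 0 < e1 from negative tail
      rw [hiff1.symm, hiff1]
      have hinj : Function.Injective (fun k : ℕ => -(k:ℤ)) :=
        fun x y hxy => Nat.cast_injective (neg_injective hxy)
      have hmneg := hmarg.comp_injective hinj
      have hbound : ∀ k : ℕ, K * (2:ℝ)^((k:ℝ)*(-e1)) ≤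
          ((fun n : ℤ => ∑' q : ℤ × ℤ, g (n, q)) ∘ fun k : ℕ => -(k:ℤ)) k := by
        intro k
        have hcast : ((-(k:ℤ) : ℤ) : ℝ) = -(k:ℝ) := by push_cast; ring
        have := hlow l1 e1 rfl (-(k:ℤ)) (hA_le1 _ (by rw [hcast]; exact neg_nonpos.mpr (Nat.cast_nonneg k)))
        rw [hcast] at this
        calc K * (2:ℝ)^((k:ℝ)*(-e1)) = K * (2:ℝ)^((-(k:ℝ))*e1) := by ring_nf
          _ ≤ _ := this
      have hsum := hmneg.of_nonneg_of_le
        (fun k => mul_nonneg hKpos.le (Real.rpow_nonneg (by norm_num) _)) hbound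
      have := geo_not_summable hKpos hsum
      linarith
    · -- e2 < 0 from positive tail
      have hmnat := hmarg.comp_injective (Nat.cast_injective : Function.Injective
        (fun k : ℕ => (k:ℤ)))
      have hbound : ∀ k : ℕ, K * (2:ℝ)^((k:ℝ)*e2) ≤
          ((fun n : ℤ => ∑' q : ℤ × ℤ, g (n, q)) ∘ fun k : ℕ => (k:ℤ)) k := by
        intro k
        have hcast : (((k:ℤ) : ℤ) : ℝ) = (k:ℝ) := by push_cast; ring
        have := hlow l2 e2 rfl ((k:ℤ)) (hA_le2 _ (by rw [hcast]; positivity))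
        rw [hcast] at this
        exact this
      have hsum := hmnat.of_nonneg_of_le
        (fun k => mul_nonneg hKpos.le (Real.rpow_nonneg (by norm_num) _)) hbound
      exact geo_not_summable hKpos hsum
  · -- sufficiency
    rintro ⟨hc2, he1, he2⟩
    have hc1 : 1 < c := by linarith
    set K : ℝ := (2 + 2/(c-1)) * (2 + 2/(c-2)) with hK
    have hKpos : 0 < K := by
      rw [hK]
      exact mul_pos (add_pos two_pos (div_pos two_pos (by linarith)))
        (add_pos two_pos (div_pos two_pos (by linarith)))
    have hup : ∀ (l e : ℝ), e = a*θ + l*(2-c) - l1 - l2 → ∀ n : ℤ,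
        (2:ℝ)^((n:ℝ)*l) ≤ An n →
        (∑' q : ℤ × ℤ, g (n, q)) ≤ K * (2:ℝ) ^ ((n:ℝ) * e) := by
      intro l e he n hAge
      subst he
      have hS := (sum2 (hApos n) (hBpos n) (hCpos n) (hBA n) (hCA n) hc2).2.1
      have h3 : (An n) ^ (2-c) ≤ ((2:ℝ)^((n:ℝ)*l)) ^ (2-c) :=
        Real.rpow_le_rpow_of_nonpos (Real.rpow_pos_of_pos two_pos _) hAge (by linarith)
      rw [← Real.rpow_mul (by norm_num : (0:ℝ) ≤ 2)] at h3
      have htq : (∑' q : ℤ × ℤ, g (n, q)) = (2:ℝ)^((n:ℝ)*(a*θ)) *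
          ∑' q : ℤ × ℤ, (An n + (2:ℝ)^((n:ℝ)*l1) * |(q.1:ℝ)|
            + (2:ℝ)^((n:ℝ)*l2) * |(q.2:ℝ)|) ^ (-c) := by
        simp only [hg]
        exact tsum_mul_left
      rw [htq]
      have hd : (0:ℝ) < (2:ℝ)^((n:ℝ)*l1)*(2:ℝ)^((n:ℝ)*l2) := mul_pos (hBpos n) (hCpos n)
      have hq : K * (2:ℝ) ^ ((n:ℝ) * (a*θ + l*(2-c) - l1 - l2))
          = (2:ℝ)^((n:ℝ)*(a*θ)) *
            (K * ((2:ℝ)^((n:ℝ)*l*(2-c)) / ((2:ℝ)^((n:ℝ)*l1)*(2:ℝ)^((n:ℝ)*l2)))) := by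
        rw [show (n:ℝ) * (a*θ + l*(2-c) - l1 - l2)
            = (n:ℝ)*(a*θ) + (n:ℝ)*l*(2-c) - (n:ℝ)*l1 - (n:ℝ)*l2 by ring]
        rw [hcollect]
        ring
      rw [hq]
      apply mul_le_mul_of_nonneg_left _ (Real.rpow_nonneg (by norm_num) _)
      calc (∑' q : ℤ × ℤ, (An n + (2:ℝ)^((n:ℝ)*l1) * |(q.1:ℝ)|
            + (2:ℝ)^((n:ℝ)*l2) * |(q.2:ℝ)|) ^ (-c))
          ≤ K * ((An n)^(2-c) / ((2:ℝ)^((n:ℝ)*l1)*(2:ℝ)^((n:ℝ)*l2))) := hS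
        _ ≤ K * ((2:ℝ)^((n:ℝ)*l*(2-c)) / ((2:ℝ)^((n:ℝ)*l1)*(2:ℝ)^((n:ℝ)*l2))) :=
            mul_le_mul_of_nonneg_left ((div_le_div_iff_of_pos_right hd).mpr h3) hKpos.le
    have hA_ge2 : ∀ n : ℤ, (2:ℝ)^((n:ℝ)*l2) ≤ An n := hCA
    have hA_ge1 : ∀ n : ℤ, (2:ℝ)^((n:ℝ)*l1) ≤ An n := hBA
    apply (summable_prod_of_nonneg hgnn).2
    constructor
    · intro n
      have := ((sum2 (hApos n) (hBpos n) (hCpos n) (hBA n) (hCA n) hc2).1).mul_left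
        ((2:ℝ)^((n:ℝ)*(a*θ)))
      exact this.congr fun q => by rw [hg]
    · apply Summable.of_nat_of_neg
      · apply (geo_summable K he2).of_nonneg_of_le
          (fun k => tsum_nonneg fun q => hgnn _)
        intro k
        have hcast : (((k:ℤ) : ℤ) : ℝ) = (k:ℝ) := by push_cast; ring
        have := hup l2 e2 rfl ((k:ℤ)) (hA_ge2 _)
        rw [hcast] at this
        exact this
      · apply (geo_summable K (by linarith : -e1 < 0)).of_nonneg_of_le
          (fun k => tsum_nonneg fun q => hgnn _)
        intro k
        have hcast : ((-(k:ℤ) : ℤ) : ℝ) = -(k:ℝ) := by push_cast; ring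
        have := hup l1 e1 rfl (-(k:ℤ)) (hA_ge1 _)
        rw [hcast] at this
        calc (∑' q : ℤ × ℤ, g (-(k:ℤ), q)) ≤ K * (2:ℝ)^((-(k:ℝ))*e1) := this
          _ = K * (2:ℝ)^((k:ℝ)*(-e1)) := by ring_nf
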